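/- arXiv:1903.12062 — 4 statements merged into one kernel-verified Lean document; each statement's English description precedes it below -/
import Mathlib

section
/- Let J_i(v) = α_i e^{√c v} + β_i e^{-√c v} for i = 1,2,3,4 with c > 0, and suppose α_i α_k = β_{i'} β_{k'} whenever {i,k,i',k'} = {1,2,3,4}. Then Σ_{i≠k} J_i(v_i)·J_k'(v_k) = 0 whenever v₁+v₂+v₃+v₄ = 0. -/
open Finset in
theorem separable_minimal_R4 (c : ℝ) (hc : 0 < c) (α β : Fin 4 → ℝ)
    (J : Fin 4 → ℝ → ℝ)
    (hJ : ∀ i v, J i v = α i * Real.exp (Real.sqrt c * v)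
                        + β i * Real.exp (-(Real.sqrt c) * v))
    (hcoef : ∀ i k i' k' : Fin 4,
      ({i, k, i', k'} : Finset (Fin 4)) = Finset.univ → α i * α k = β i' * β k') :
    ∀ v : Fin 4 → ℝ, (∑ i, v i) = 0 →
      (∑ i : Fin 4, ∑ k : Fin 4,
        if i ≠ k then J i (v i) * deriv (J k) (v k) else 0) = 0 := by
  set s := Real.sqrt c with hs
  have hderiv : ∀ (k : Fin 4) (x : ℝ),
      deriv (J k) x = s * (α k * Real.exp (s * x)) - s * (β k * Real.exp (-s * x)) := by
    intro k x
    have hk : J k = fun y => α k * Real.exp (s * y) + β k * Real.exp (-s * y) :=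
      funext fun y => by rw [hJ]
    rw [hk]
    have e1 : HasDerivAt (fun y : ℝ => s * y) s x := by
      simpa using (hasDerivAt_id x).const_mul s
    have e2 : HasDerivAt (fun y : ℝ => -s * y) (-s) x := by
      simpa using (hasDerivAt_id x).const_mul (-s)
    have h1 : HasDerivAt (fun y : ℝ => α k * Real.exp (s * y) + β k * Real.exp (-s * y))
        (α k * (Real.exp (s * x) * s) + β k * (Real.exp (-s * x) * (-s))) x :=
      ((e1.exp).const_mul (α k)).add ((e2.exp).const_mul (β k))
    rw [h1.deriv]; ring
  intro v hv
  have hsum : v 0 + v 1 + v 2 + v 3 = 0 := by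
    simpa [Fin.sum_univ_four] using hv
  have hn0 : Real.exp (-(s * v 0)) = Real.exp (s * v 1) * Real.exp (s * v 2) * Real.exp (s * v 3) := by
    rw [← Real.exp_add, ← Real.exp_add]; congr 1; linear_combination (-s) * hsum
  have hn1 : Real.exp (-(s * v 1)) = Real.exp (s * v 0) * Real.exp (s * v 2) * Real.exp (s * v 3) := by
    rw [← Real.exp_add, ← Real.exp_add]; congr 1; linear_combination (-s) * hsum
  have hn2 : Real.exp (-(s * v 2)) = Real.exp (s * v 0) * Real.exp (s * v 1) * Real.exp (s * v 3) := by
    rw [← Real.exp_add, ← Real.exp_add]; congr 1; linear_combination (-s) * hsum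
  have hn3 : Real.exp (-(s * v 3)) = Real.exp (s * v 0) * Real.exp (s * v 1) * Real.exp (s * v 2) := by
    rw [← Real.exp_add, ← Real.exp_add]; congr 1; linear_combination (-s) * hsum
  have hprod : Real.exp (s * v 0) * Real.exp (s * v 1) * Real.exp (s * v 2) * Real.exp (s * v 3) = 1 := by
    rw [← Real.exp_add, ← Real.exp_add, ← Real.exp_add, ← Real.exp_zero]
    congr 1; linear_combination s * hsum
  have h12 : α 0 * α 1 = β 2 * β 3 := hcoef 0 1 2 3 (by decide)
  have h34 : α 2 * α 3 = β 0 * β 1 := hcoef 2 3 0 1 (by decide)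
  have h13 : α 0 * α 2 = β 1 * β 3 := hcoef 0 2 1 3 (by decide)
  have h24 : α 1 * α 3 = β 0 * β 2 := hcoef 1 3 0 2 (by decide)
  have h14 : α 0 * α 3 = β 1 * β 2 := hcoef 0 3 1 2 (by decide)
  have h23 : α 1 * α 2 = β 0 * β 3 := hcoef 1 2 0 3 (by decide)
  simp only [Fin.sum_univ_four, hJ, hderiv, ne_eq, Fin.reduceEq, not_false_eq_true, not_true_eq_false,
    ite_true, ite_false, ↓reduceIte, neg_mul, neg_neg, hn0, hn1, hn2, hn3]
  linear_combination 2*s*(Real.exp (s*v 0)*Real.exp (s*v 1))*h12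
    + 2*s*(Real.exp (s*v 2)*Real.exp (s*v 3))*h34
    + 2*s*(Real.exp (s*v 0)*Real.exp (s*v 2))*h13
    + 2*s*(Real.exp (s*v 1)*Real.exp (s*v 3))*h24
    + 2*s*(Real.exp (s*v 0)*Real.exp (s*v 3))*h14
    + 2*s*(Real.exp (s*v 1)*Real.exp (s*v 2))*h23
    - 2*s*(β 2*β 3*Real.exp (s*v 0)*Real.exp (s*v 1)
         + β 0*β 1*Real.exp (s*v 2)*Real.exp (s*v 3)
         + β 1*β 3*Real.exp (s*v 0)*Real.exp (s*v 2)
         + β 0*β 2*Real.exp (s*v 1)*Real.exp (s*v 3)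
         + β 1*β 2*Real.exp (s*v 0)*Real.exp (s*v 3)
         + β 0*β 3*Real.exp (s*v 1)*Real.exp (s*v 2)) * hprod
end

section
/- If all b_i (i = 1,…,N) satisfy B·b_i - b_i² = const with B = Σ b_i, then the b_i take at most two distinct values b_± = (B/2)(1 ± √(1-c)); if r of them equal b₊ and N-r equal b₋, then (N-2r)√(1-c) = N-2, i.e. √(1-c) = (N-2)/(N-2r). -/
open Finset in
theorem linear_case_classification (N : ℕ) (b : Fin N → ℝ) (B c : ℝ)
    (hB : B = ∑ i, b i) (hB0 : B ≠ 0)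
    (hconst : ∀ i, B * b i - (b i) ^ 2 = c * B ^ 2 / 4) :
    (∀ i, b i = B / 2 * (1 + Real.sqrt (1 - c)) ∨
          b i = B / 2 * (1 - Real.sqrt (1 - c))) ∧
    (∀ r : ℕ,
      (Finset.univ.filter fun i => b i = B / 2 * (1 + Real.sqrt (1 - c))).card = r →
      (Finset.univ.filter fun i => b i = B / 2 * (1 - Real.sqrt (1 - c))).card = N - r →
      ((N : ℝ) - 2 * r) * Real.sqrt (1 - c) = (N : ℝ) - 2) := by
  -- N ≠ 0
  have hN : N ≠ 0 := by
    rintro rfl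
    simp at hB
    exact hB0 hB
  have i0 : Fin N := ⟨0, Nat.pos_of_ne_zero hN⟩
  have key : ∀ i, (b i - B / 2) ^ 2 = (B / 2) ^ 2 * (1 - c) := by
    intro i
    have h := hconst i
    nlinarith [h]
  have hBpos : (B / 2) ^ 2 > 0 := by positivity
  have hc : 0 ≤ 1 - c := by nlinarith [key i0, sq_nonneg (b i0 - B / 2)]
  set S := Real.sqrt (1 - c) with hS
  have hS2 : S ^ 2 = 1 - c := Real.sq_sqrt hc
  have main : ∀ i, b i = B / 2 * (1 + S) ∨ b i = B / 2 * (1 - S) := by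
    intro i
    have h : (b i - B / 2 * (1 + S)) * (b i - B / 2 * (1 - S)) = 0 := by
      have := key i
      nlinarith [this, hS2]
    rcases mul_eq_zero.1 h with h' | h'
    · left; linarith
    · right; linarith
  refine ⟨main, ?_⟩
  intro r hr hr'
  by_cases hS0 : S = 0
  · -- then both values coincide, filters are all of univ
    have heq : ∀ i : Fin N, b i = B / 2 * (1 + S) := by
      intro i
      rcases main i with h | h
      · exact h
      · rw [h, hS0]; ring
    have h1 : (Finset.univ.filter fun i => b i = B / 2 * (1 + S)) = Finset.univ := by
      apply Finset.filter_true_of_mem; intro i _; exact heq i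
    have h2 : (Finset.univ.filter fun i => b i = B / 2 * (1 - S)) = Finset.univ := by
      apply Finset.filter_true_of_mem; intro i _
      rw [heq i, hS0]; ring
    rw [h1, Finset.card_univ, Fintype.card_fin] at hr
    rw [h2, Finset.card_univ, Fintype.card_fin] at hr'
    omega
  · have hpm : B / 2 * (1 + S) ≠ B / 2 * (1 - S) := by
      intro h
      have : B * S = 0 := by nlinarith [h]
      rcases mul_eq_zero.1 this with h' | h'
      · exact hB0 h'
      · exact hS0 h'
    set A := Finset.univ.filter (fun i => b i = B / 2 * (1 + S)) with hA
    have hcompl : (Finset.univ.filter fun i => b i = B / 2 * (1 - S)) = Aᶜ := by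
      ext i
      simp only [hA, Finset.mem_filter, Finset.mem_compl, Finset.mem_univ, true_and]
      constructor
      · intro h h'
        exact hpm (h'.symm.trans h)
      · intro h
        rcases main i with h' | h'
        · exact absurd h' h
        · exact h'
    have hrle : r ≤ N := by
      rw [← hr]
      simpa using Finset.card_le_univ A
    have hcard : ((N - r : ℕ) : ℝ) = (N : ℝ) - r := by
      push_cast [Nat.cast_sub hrle]; ring
    have hmem1 : ∀ i ∈ A, b i = B / 2 * (1 + S) := by
      intro i hi
      simp only [hA, Finset.mem_filter] at hi
      exact hi.2
    have hmem2 : ∀ i ∈ Aᶜ, b i = B / 2 * (1 - S) := by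
      intro i hi
      rw [← hcompl] at hi
      exact (Finset.mem_filter.1 hi).2
    have e1 : ∑ i ∈ A, b i = (r : ℝ) * (B / 2 * (1 + S)) := by
      rw [Finset.sum_congr rfl hmem1, Finset.sum_const, hr, nsmul_eq_mul]
    have e2 : ∑ i ∈ Aᶜ, b i = ((N : ℝ) - r) * (B / 2 * (1 - S)) := by
      rw [Finset.sum_congr rfl hmem2, Finset.sum_const, ← hcompl, hr', nsmul_eq_mul, hcard]
    have hsplit : ∑ i ∈ A, b i + ∑ i ∈ Aᶜ, b i = ∑ i, b i :=
      Finset.sum_add_sum_compl A b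
    have hsum : B = (r : ℝ) * (B / 2 * (1 + S)) + ((N : ℝ) - r) * (B / 2 * (1 - S)) := by
      conv_lhs => rw [hB]
      rw [← hsplit, e1, e2]
    have key2 : B / 2 * (((N : ℝ) - 2 * r) * S - ((N : ℝ) - 2)) = 0 := by
      linear_combination hsum
    rcases mul_eq_zero.1 key2 with h | h
    · exact absurd (by linarith : B = 0) hB0
    · linarith
end

section
/- For the torus graph equation, the conserved quantity holds: if θ : ℝ → ℝ satisfies s c [ s c θ̈ (k²s² + l²c²) + θ̇²((l²-k²)s²c² + 2s⁴k² - 2c⁴l²) + s²c²(s²-c²) ] = 0 with s = sin θ(t), c = cos θ(t), and θ̇, sc ≠ 0, then d/dt [ s²c²/√(c²s² + (k²s²+l²c²)θ̇²) ] = 0. -/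
theorem torus_conserved_quantity (k l : ℝ) (θ : ℝ → ℝ) (hθ : ContDiff ℝ 2 θ)
    (hne : ∀ t, deriv θ t ≠ 0 ∧ Real.sin (θ t) * Real.cos (θ t) ≠ 0)
    (hode : ∀ t,
      Real.sin (θ t) * Real.cos (θ t) *
        (Real.sin (θ t) * Real.cos (θ t) * deriv (deriv θ) t *
            (k ^ 2 * Real.sin (θ t) ^ 2 + l ^ 2 * Real.cos (θ t) ^ 2)
          + (deriv θ t) ^ 2 *
              ((l ^ 2 - k ^ 2) * Real.sin (θ t) ^ 2 * Real.cos (θ t) ^ 2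
                + 2 * Real.sin (θ t) ^ 4 * k ^ 2
                - 2 * Real.cos (θ t) ^ 4 * l ^ 2)
          + Real.sin (θ t) ^ 2 * Real.cos (θ t) ^ 2 *
              (Real.sin (θ t) ^ 2 - Real.cos (θ t) ^ 2)) = 0) :
    ∀ t : ℝ,
      deriv (fun t' =>
        Real.sin (θ t') ^ 2 * Real.cos (θ t') ^ 2 /
          Real.sqrt (Real.cos (θ t') ^ 2 * Real.sin (θ t') ^ 2
            + (k ^ 2 * Real.sin (θ t') ^ 2 + l ^ 2 * Real.cos (θ t') ^ 2)
                * (deriv θ t') ^ 2)) t = 0 := by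
  intro t
  have h2 : ContDiff ℝ (1 + 1) θ := by norm_num; exact hθ
  obtain ⟨hθd, -, hθ'c⟩ := contDiff_succ_iff_deriv.mp h2
  set s := Real.sin (θ t) with hs_def
  set c := Real.cos (θ t) with hc_def
  set u := deriv θ t with hu_def
  set a := deriv (deriv θ) t with ha_def
  have hθt : HasDerivAt θ u t := (hθd t).hasDerivAt
  have hut : HasDerivAt (deriv θ) a t := ((hθ'c.differentiable one_ne_zero) t).hasDerivAt
  have hsin : HasDerivAt (fun t' => Real.sin (θ t')) (c * u) t :=
    (Real.hasDerivAt_sin (θ t)).comp t hθt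
  have hcos : HasDerivAt (fun t' => Real.cos (θ t')) (-s * u) t :=
    (Real.hasDerivAt_cos (θ t)).comp t hθt
  have hN : HasDerivAt (fun t' => Real.sin (θ t') ^ 2 * Real.cos (θ t') ^ 2)
      ((2 * s ^ 1 * (c * u)) * c ^ 2 + s ^ 2 * (2 * c ^ 1 * (-s * u))) t :=
    (hsin.pow 2).mul (hcos.pow 2)
  set D' : ℝ := (2 * c ^ 1 * (-s * u)) * s ^ 2 + c ^ 2 * (2 * s ^ 1 * (c * u))
      + ((k ^ 2 * (2 * s ^ 1 * (c * u)) + l ^ 2 * (2 * c ^ 1 * (-s * u))) * u ^ 2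
        + (k ^ 2 * s ^ 2 + l ^ 2 * c ^ 2) * (2 * u ^ 1 * a)) with hD'_def
  have hD : HasDerivAt (fun t' => Real.cos (θ t') ^ 2 * Real.sin (θ t') ^ 2
      + (k ^ 2 * Real.sin (θ t') ^ 2 + l ^ 2 * Real.cos (θ t') ^ 2) * (deriv θ t') ^ 2) D' t :=
    ((hcos.pow 2).mul (hsin.pow 2)).add
      ((((hsin.pow 2).const_mul (k ^ 2)).add ((hcos.pow 2).const_mul (l ^ 2))).mul (hut.pow 2))
  set Dt : ℝ := c ^ 2 * s ^ 2 + (k ^ 2 * s ^ 2 + l ^ 2 * c ^ 2) * u ^ 2 with hDt_def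
  have hu0 := (hne t).1
  have hsc0 := (hne t).2
  have hs0 : s ≠ 0 := fun h => hsc0 (by rw [← hs_def, h]; ring)
  have hc0 : c ≠ 0 := fun h => hsc0 (by rw [← hc_def, ← hs_def, h]; ring)
  have hDpos : 0 < Dt := by
    have h1 : 0 < c ^ 2 * s ^ 2 := by positivity
    have h2 : 0 ≤ (k ^ 2 * s ^ 2 + l ^ 2 * c ^ 2) * u ^ 2 := by positivity
    linarith
  have hsqrtpos : 0 < Real.sqrt Dt := Real.sqrt_pos.mpr hDpos
  have hsq : Real.sqrt Dt ^ 2 = Dt := Real.sq_sqrt hDpos.le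
  have hsqrt : HasDerivAt (fun t' => Real.sqrt (Real.cos (θ t') ^ 2 * Real.sin (θ t') ^ 2
      + (k ^ 2 * Real.sin (θ t') ^ 2 + l ^ 2 * Real.cos (θ t') ^ 2) * (deriv θ t') ^ 2))
      (1 / (2 * Real.sqrt Dt) * D') t :=
    (Real.hasDerivAt_sqrt hDpos.ne').comp t hD
  have hf := hN.div hsqrt hsqrtpos.ne'
  refine hf.deriv.trans ?_
  have hB : s * c * a * (k ^ 2 * s ^ 2 + l ^ 2 * c ^ 2)
      + u ^ 2 * ((l ^ 2 - k ^ 2) * s ^ 2 * c ^ 2 + 2 * s ^ 4 * k ^ 2 - 2 * c ^ 4 * l ^ 2)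
      + s ^ 2 * c ^ 2 * (s ^ 2 - c ^ 2) = 0 := by
    rcases mul_eq_zero.mp (hode t) with h | h
    · exact absurd h hsc0
    · exact h
  have key : (2 * s ^ 1 * (c * u) * c ^ 2 + s ^ 2 * (2 * c ^ 1 * (-s * u))) *
      Real.sqrt Dt - s ^ 2 * c ^ 2 * (1 / (2 * Real.sqrt Dt) * D') = 0 := by
    have h : ((2 * s ^ 1 * (c * u) * c ^ 2 + s ^ 2 * (2 * c ^ 1 * (-s * u))) *
        Real.sqrt Dt - s ^ 2 * c ^ 2 * (1 / (2 * Real.sqrt Dt) * D')) * (2 * Real.sqrt Dt)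
        = 0 := by
      field_simp
      linear_combination (2 * (2 * s * (c * u) * c ^ 2 - s ^ 2 * (2 * c * (s * u)))) * hsq
        + (2 * (2 * s * (c * u) * c ^ 2 - s ^ 2 * (2 * c * (s * u)))) * hDt_def
        - 2 * s * c * u * hB
    rcases mul_eq_zero.mp h with h' | h'
    · exact h'
    · exact absurd h' (by positivity)
  rw [key]
  simp
end

section
/- Given α(φ) with sin α(φ) = 1/√(cos²φ + cosh²γ sin²φ) and cos α(φ) = -sinh γ · sin φ/√(cos²φ + cosh²γ sin²φ), the ODE α̇² + sin²α·(1 - cosh²γ · sin²α) = 0 is satisfied for all φ. -/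
theorem hopf_great_circle_ode (γ : ℝ) (hγ : 0 < γ) (α : ℝ → ℝ)
    (hα : Differentiable ℝ α)
    (hsin : ∀ φ, Real.sin (α φ) =
      1 / Real.sqrt (Real.cos φ ^ 2 + Real.cosh γ ^ 2 * Real.sin φ ^ 2))
    (hcos : ∀ φ, Real.cos (α φ) =
      -Real.sinh γ * Real.sin φ /
        Real.sqrt (Real.cos φ ^ 2 + Real.cosh γ ^ 2 * Real.sin φ ^ 2)) :
    ∀ φ : ℝ,
      (deriv α φ) ^ 2 + Real.sin (α φ) ^ 2 *
        (1 - Real.cosh γ ^ 2 * Real.sin (α φ) ^ 2) = 0 := by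
  intro φ
  have hca : Real.cosh γ ^ 2 = 1 + Real.sinh γ ^ 2 := by
    have := Real.cosh_sq γ; linarith
  set a := Real.cosh γ
  set s := Real.sinh γ
  set Q : ℝ → ℝ := fun x => Real.cos x ^ 2 + a ^ 2 * Real.sin x ^ 2 with hQdef
  have hQval : ∀ x, Q x = 1 + s ^ 2 * Real.sin x ^ 2 := by
    intro x
    have := Real.sin_sq_add_cos_sq x
    simp only [hQdef]
    nlinarith
  have hQpos : 0 < Q φ := by
    rw [hQval]; nlinarith [sq_nonneg (s * Real.sin φ)]
  have hQne : Q φ ≠ 0 := ne_of_gt hQpos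
  set r := Real.sqrt (Q φ) with hrdef
  have hrpos : 0 < r := Real.sqrt_pos.mpr hQpos
  have hrne : r ≠ 0 := ne_of_gt hrpos
  have hr2 : r ^ 2 = Q φ := Real.sq_sqrt (le_of_lt hQpos)
  -- derivative of Q
  have hQ' : HasDerivAt Q
      ((2 : ℕ) * Real.cos φ ^ 1 * (-Real.sin φ) +
        a ^ 2 * ((2 : ℕ) * Real.sin φ ^ 1 * Real.cos φ)) φ := by
    exact ((Real.hasDerivAt_cos φ).pow 2).add
      (((Real.hasDerivAt_sin φ).pow 2).const_mul (a ^ 2))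
  -- derivative of sqrt ∘ Q
  have hsq : HasDerivAt (fun x => Real.sqrt (Q x))
      (1 / (2 * r) * ((2 : ℕ) * Real.cos φ ^ 1 * (-Real.sin φ) +
        a ^ 2 * ((2 : ℕ) * Real.sin φ ^ 1 * Real.cos φ))) φ :=
    (Real.hasDerivAt_sqrt hQne).comp φ hQ'
  -- numerator
  have hnum : HasDerivAt (fun x => -s * Real.sin x) (-s * Real.cos φ) φ :=
    (Real.hasDerivAt_sin φ).const_mul (-s)
  set D : ℝ := (-s * Real.cos φ * r -
      (-s * Real.sin φ) * (1 / (2 * r) * ((2 : ℕ) * Real.cos φ ^ 1 * (-Real.sin φ) +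
        a ^ 2 * ((2 : ℕ) * Real.sin φ ^ 1 * Real.cos φ)))) / r ^ 2 with hDdef
  have hg : HasDerivAt (fun x => -s * Real.sin x / Real.sqrt (Q x)) D φ :=
    hnum.div hsq hrne
  -- cos ∘ α has this same derivative
  have hcoseq : (fun x => Real.cos (α x)) = (fun x => -s * Real.sin x / Real.sqrt (Q x)) :=
    funext fun x => hcos x
  have hchain : HasDerivAt (fun x => Real.cos (α x)) (-Real.sin (α φ) * deriv α φ) φ :=
    (Real.hasDerivAt_cos (α φ)).comp φ (hα φ).hasDerivAt
  rw [hcoseq] at hchain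
  have hEq : -Real.sin (α φ) * deriv α φ = D := hchain.unique hg
  rw [hsin φ] at hEq
  have hrr : Real.sqrt (Real.cos φ ^ 2 + a ^ 2 * Real.sin φ ^ 2) = r := rfl
  rw [hrr] at hEq
  have hr2' : r ^ 2 = Real.cos φ ^ 2 + a ^ 2 * Real.sin φ ^ 2 := hr2
  have hpyth := Real.sin_sq_add_cos_sq φ
  have hDval : D = -(s * Real.cos φ) / r ^ 3 := by
    rw [hDdef]
    field_simp
    linear_combination (-2 * s * Real.cos φ) * hr2' +
      (-2 * s * Real.cos φ) * hpyth
  have hderiv : deriv α φ = s * Real.cos φ / r ^ 2 := by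
    rw [hDval] at hEq
    field_simp at hEq ⊢
    have h2 : deriv α φ * r ^ 2 * r = s * Real.cos φ * r := by linear_combination (-r) * hEq
    exact mul_right_cancel₀ hrne (by linear_combination h2)
  rw [hderiv, hsin φ, hrr]
  have hstep : (s * Real.cos φ / r ^ 2) ^ 2 + (1 / r) ^ 2 * (1 - a ^ 2 * (1 / r) ^ 2) =
      (s ^ 2 * Real.cos φ ^ 2 + r ^ 2 - a ^ 2) / r ^ 4 := by
    field_simp
    ring
  rw [hstep]
  have hz : s ^ 2 * Real.cos φ ^ 2 + r ^ 2 - a ^ 2 = 0 := by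
    rw [hr2']
    linear_combination (Real.sin φ ^ 2 - 1) * hca + (s ^ 2 + 1) * hpyth
  rw [hz, zero_div]
end
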